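/- Assume conditions (H2), (H3) and (H4). For nonzero f ∈ V set top(f) := max{|𝐧| : π_𝐧(f) ≠ 0}. Then for every j ∈ {1,…,d} and every nonzero f ∈ V, one has T_j(f) ≠ 0 and top(T_j(f)) = top(f) + 1. In particular each operator T_j is injective on V. -/

import Mathlib

/-- Under (H2)–(H4), for every `j` and every nonzero `f`,
`T j f ≠ 0` and `top (T j f) = top f + 1`, where `top f` is the greatest value
of `|𝐧|` with `π 𝐧 f ≠ 0` (expressed via `IsGreatest`). In particular every
`T j` is injective. -/
theorem stmt_2
    (k : Type*) [Field k] (V : Type*) [AddCommGroup V] [Module k V]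
    (d : ℕ) (hd : 1 ≤ d)
    (C : (Fin d → ℕ) → Submodule k V)
    (hC : DirectSum.IsInternal C)
    (hCne : ∀ m, C m ≠ ⊥)
    (π : (Fin d → ℕ) → (V →ₗ[k] V))
    (hπ_eq : ∀ m, ∀ v ∈ C m, π m v = v)
    (hπ_ne : ∀ m m', m ≠ m' → ∀ v ∈ C m', π m v = 0)
    (T : Fin d → Module.End k V)
    (hcomm : ∀ a b, Commute (T a) (T b))
    (B : ℕ → Submodule k V)
    (hB : ∀ N, B N = ⨆ (m : Fin d → ℕ) (_ : ∑ l, m l ≤ N), C m)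
    -- (H2)
    (H2a : ∀ j, ∀ v ∈ C 0, T j v ∈ C (Pi.single j 1))
    (H2b : ∀ j : Fin d, Set.InjOn (⇑(T j)) (C 0 : Set V))
    -- (H3)
    (H3 : ∀ m : Fin d → ℕ, m ≠ 0 → ∀ j : Fin d, ∀ v ∈ C m,
      T j v ∈ (if m j = 0 then (⊥ : Submodule k V) else C (m - Pi.single j 1))
        ⊔ C m ⊔ C (m + Pi.single j 1))
    -- (H4)
    (H4 : ∀ (j : Fin d) (N : ℕ), ∀ f ∈ B (N + 1), T j f ∈ B (N + 1) → f ∈ B N) :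
    ∀ (j : Fin d) (f : V), f ≠ 0 →
      T j f ≠ 0 ∧
      ∀ t : ℕ,
        IsGreatest {s : ℕ | ∃ m : Fin d → ℕ, (∑ l, m l) = s ∧ π m f ≠ 0} t →
        IsGreatest {s : ℕ | ∃ m : Fin d → ℕ, (∑ l, m l) = s ∧ π m (T j f) ≠ 0} (t + 1) := by
  classical
  letI : DirectSum.Decomposition C := hC.chooseDecomposition
  -- L1 : π agrees with decompose components
  have L1 : ∀ (f : V) (m : Fin d → ℕ), π m f = (DirectSum.decompose C f m : V) := by
    intro f
    induction f using DirectSum.Decomposition.inductionOn (ℳ := C) with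
    | zero => intro m; simp
    | @homogeneous i v =>
      intro m
      by_cases h : i = m
      · subst h
        rw [hπ_eq _ _ v.2, DirectSum.decompose_of_mem_same C v.2]
      · rw [hπ_ne _ _ (Ne.symm h) _ v.2, DirectSum.decompose_of_mem_ne C v.2 h]
    | add x y hx hy =>
      intro m
      rw [map_add, hx m, hy m, DirectSum.decompose_add]
      simp
  -- (b): membership in B N constrains supports
  have memB_b : ∀ (N : ℕ) (f : V), f ∈ B N → ∀ m, π m f ≠ 0 → ∑ l, m l ≤ N := by
    intro N f hf m hm
    by_contra hgt
    apply hm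
    have : B N ≤ LinearMap.ker (π m) := by
      rw [hB N]
      refine iSup₂_le fun m' hm' => ?_
      intro v hv
      have hne : m ≠ m' := by rintro rfl; exact hgt hm'
      simpa [LinearMap.mem_ker] using hπ_ne m m' hne v hv
    exact this hf
  -- (a): if all nonzero components have small degree then f ∈ B N
  have memB_a : ∀ (N : ℕ) (f : V), (∀ m, π m f ≠ 0 → ∑ l, m l ≤ N) → f ∈ B N := by
    intro N f hsmall
    have hsum := DirectSum.sum_support_decompose C f
    rw [← hsum]
    refine Submodule.sum_mem _ fun m hm => ?_
    by_cases h0 : (DirectSum.decompose C f m : V) = 0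
    · rw [h0]; exact Submodule.zero_mem _
    · have hπ : π m f ≠ 0 := by rw [L1]; exact h0
      rw [hB N]
      exact SetLike.le_def.mp (le_iSup₂ (f := fun m _ => C m) m (hsmall m hπ))
        (DirectSum.decompose C f m).2
  -- sum of Pi.single j 1
  have hsingle : ∀ j : Fin d, ∑ l : Fin d, (Pi.single j 1 : Fin d → ℕ) l = 1 := by
    intro j; simp
  -- T j maps B N into B (N+1)
  have TmapB : ∀ (j : Fin d) (N : ℕ) (f : V), f ∈ B N → T j f ∈ B (N + 1) := by
    intro j N f hf
    have : B N ≤ Submodule.comap (T j) (B (N + 1)) := by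
      rw [hB N]
      refine iSup₂_le fun m hm => ?_
      intro v hv
      have hsub : ∀ m' : Fin d → ℕ, (∑ l, m' l) ≤ N + 1 → C m' ≤ B (N + 1) := by
        intro m' hm'
        rw [hB (N + 1)]
        exact le_iSup₂ (f := fun m _ => C m) m' hm'
      simp only [Submodule.mem_comap]
      by_cases h0 : m = 0
      · subst h0
        have h1 : T j v ∈ C (Pi.single j 1) := H2a j v hv
        exact hsub _ (by rw [hsingle j]; omega) h1
      · have h3 := H3 m h0 j v hv
        have hle : (if m j = 0 then (⊥ : Submodule k V) else C (m - Pi.single j 1))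
            ⊔ C m ⊔ C (m + Pi.single j 1) ≤ B (N + 1) := by
          refine sup_le (sup_le ?_ ?_) ?_
          · by_cases hmj : m j = 0
            · simp [hmj]
            · simp only [hmj, if_false]
              refine hsub _ ?_
              calc ∑ l : Fin d, (m - Pi.single j 1 : Fin d → ℕ) l ≤ ∑ l, m l :=
                      Finset.sum_le_sum fun l _ => tsub_le_self
                _ ≤ N + 1 := by omega
          · exact hsub _ (by omega)
          · refine hsub _ ?_
            have : ∑ l : Fin d, (m + Pi.single j 1 : Fin d → ℕ) l = (∑ l, m l) + 1 := by
              simp [Finset.sum_add_distrib, hsingle j]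
            omega
        exact hle h3
    exact this hf
  -- B 0 ≤ C 0
  have hB0 : B 0 ≤ C 0 := by
    rw [hB 0]
    refine iSup₂_le fun m hm => ?_
    have : m = 0 := by
      funext l
      have := Finset.sum_eq_zero_iff.mp (Nat.le_zero.mp hm) l (Finset.mem_univ l)
      simpa using this
    rw [this]
  intro j f hf
  -- key step
  have key : ∀ t : ℕ,
      IsGreatest {s : ℕ | ∃ m : Fin d → ℕ, (∑ l, m l) = s ∧ π m f ≠ 0} t →
      IsGreatest {s : ℕ | ∃ m : Fin d → ℕ, (∑ l, m l) = s ∧ π m (T j f) ≠ 0} (t + 1) := by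
    rintro t ⟨⟨m1, hm1sum, hm1ne⟩, hub⟩
    have hfB : f ∈ B t := memB_a t f fun m hm => hub ⟨m, rfl, hm⟩
    match t with
    | 0 =>
      have hfC0 : f ∈ C 0 := hB0 hfB
      have hTfC : T j f ∈ C (Pi.single j 1) := H2a j f hfC0
      have hTfne : T j f ≠ 0 := by
        intro h
        apply hf
        exact H2b j hfC0 (Submodule.zero_mem _) (by rw [h, map_zero])
      constructor
      · exact ⟨Pi.single j 1, hsingle j, by rw [hπ_eq _ _ hTfC]; exact hTfne⟩
      · rintro s ⟨m, rfl, hm⟩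
        exact memB_b 1 (T j f) (TmapB j 0 f hfB) m hm
    | (t' + 1) =>
      have hTfB : T j f ∉ B (t' + 1) := by
        intro habs
        have : f ∈ B t' := H4 j t' f hfB habs
        have := memB_b t' f this m1 hm1ne
        omega
      have hTfB1 : T j f ∈ B (t' + 2) := TmapB j (t' + 1) f hfB
      have hex : ∃ m, π m (T j f) ≠ 0 ∧ ¬ (∑ l, m l) ≤ t' + 1 := by
        by_contra h
        push_neg at h
        exact hTfB (memB_a (t' + 1) (T j f) h)
      obtain ⟨m, hmne, hmgt⟩ := hex
      have hle := memB_b (t' + 2) (T j f) hTfB1 m hmne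
      constructor
      · exact ⟨m, by omega, hmne⟩
      · rintro s ⟨m', rfl, hm'⟩
        exact memB_b (t' + 2) (T j f) hTfB1 m' hm'
  -- existence of a greatest element for f
  have hg : DirectSum.decompose C f ≠ DirectSum.decompose C 0 := by
    intro h
    exact hf ((DirectSum.decompose C).injective h)
  obtain ⟨m0, hm0⟩ : ∃ m0, DirectSum.decompose C f m0 ≠ DirectSum.decompose C (0:V) m0 := by
    by_contra h
    push_neg at h
    exact hg (DFinsupp.ext h)
  rw [DirectSum.decompose_zero] at hm0
  have hm0' : π m0 f ≠ 0 := by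
    rw [L1]
    intro h
    exact hm0 (Subtype.ext (by rw [h]; rfl))
  set S := {s : ℕ | ∃ m : Fin d → ℕ, (∑ l, m l) = s ∧ π m f ≠ 0} with hS
  have hSne : S.Nonempty := ⟨∑ l, m0 l, m0, rfl, hm0'⟩
  have hSbdd : BddAbove S := by
    set N0 := Finset.sup (DirectSum.decompose C f).support (fun m => ∑ l, m l) with hN0
    refine ⟨N0, ?_⟩
    rintro s ⟨m, rfl, hm⟩
    have hmem : m ∈ (DirectSum.decompose C f).support := by
      rw [DFinsupp.mem_support_iff]
      intro h
      apply hm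
      rw [L1, h]; rfl
    exact Finset.le_sup hmem
  have ht0 : IsGreatest S (sSup S) := ⟨Nat.sSup_mem hSne hSbdd, fun s hs => le_csSup hSbdd hs⟩
  have hkey := key (sSup S) ht0
  refine ⟨?_, key⟩
  obtain ⟨m, -, hm⟩ := hkey.1
  intro h
  apply hm
  rw [h, map_zero]
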